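/- (Local wreath product principle, direction 1.) Let A be an asynchronous automaton over Σ̃ with transition atm T_A and local asynchronous transducer χ_A : TR(Σ̃) → TR(Σ̃^{∥S}). If a trace language L ⊆ TR(Σ̃^{∥S}) is recognized by an atm T via an asynchronous morphism, then χ_A^{-1}(L) ⊆ TR(Σ̃) is recognized by the asynchronous wreath product T_A ≀ T. Specifically, defining η(a) = (φ_A(a), f_a) with f_a(s) = ψ((a, s_a)) (where ψ recognizes L), η extends to an asynchronous morphism recognizing χ_A^{-1}(L) with initial state (s_in, q_in) and final set S_𝒫 × Q_fin. -/

import Mathlib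

/-- `h` is a `P`-map. -/
def IsPMap {ι : Type} {S : ι → Type} (P : Set ι)
    (h : (∀ i, S i) → (∀ i, S i)) : Prop :=
  (∀ s, ∀ i ∉ P, h s i = s i) ∧
  (∀ s s', (∀ i ∈ P, s i = s' i) → ∀ i ∈ P, h s i = h s' i)

/-- `P`-map condition on pairs of global states (coordinatewise
identification `(S_i × Q_i)_𝒫 ≅ S_𝒫 × Q_𝒫`). -/
def IsPMap2 {ι : Type} {S Q : ι → Type} (P : Set ι)
    (h : ((∀ i, S i) × (∀ i, Q i)) → ((∀ i, S i) × (∀ i, Q i))) : Prop :=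
  (∀ p, ∀ i ∉ P, (h p).1 i = p.1 i ∧ (h p).2 i = p.2 i) ∧
  (∀ p p', (∀ i ∈ P, p.1 i = p'.1 i ∧ p.2 i = p'.2 i) →
    ∀ i ∈ P, (h p).1 i = (h p').1 i ∧ (h p).2 i = (h p').2 i)

/-- The trace congruence: `ab ∼ ba` whenever `loc a ∩ loc b = ∅`. -/
def traceCon {ι A : Type} (loc : A → Finset ι) : Con (FreeMonoid A) :=
  conGen (fun x y => ∃ a b, Disjoint (loc a) (loc b) ∧
    x = FreeMonoid.of a * FreeMonoid.of b ∧ y = FreeMonoid.of b * FreeMonoid.of a)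

/-- The extended alphabet `Σ^{∥S}`. -/
def ExtLetter {ι : Type} (A : Type) (loc : A → Finset ι) (S : ι → Type) : Type :=
  (a : A) × (∀ i : {x // x ∈ loc a}, S i.1)

def locE {ι A : Type} (loc : A → Finset ι) {S : ι → Type} :
    ExtLetter A loc S → Finset ι := fun e => loc e.1

/-- The word-level local asynchronous transducer. -/
def transduce {ι A : Type} (loc : A → Finset ι) {S : ι → Type}
    (Δ : A → (∀ i, S i) → (∀ i, S i)) :
    (∀ i, S i) → List A → List (ExtLetter A loc S)
  | _, [] => []
  | s, a :: w => ⟨a, fun i => s i.1⟩ :: transduce loc Δ (Δ a s) w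

/-- local wreath product principle, direction 1: if
`L ⊆ TR(Σ̃^{∥S})` is recognized by an atm `T` via an asynchronous morphism `ψ`,
then `χ_A⁻¹(L)` is recognized by `T_A ≀ T` via the asynchronous morphism `η`
with `η(a) = (φ_A(a), s ↦ ψ((a, s_a)))`, initial state `(s_in, q_in)` and
final set `S_𝒫 × Q_fin`. -/
theorem local_wreath_product_principle_1 {ι A : Type} (loc : A → Finset ι)
    {S Q : ι → Type} [∀ i, Finite (S i)] [∀ i, Nonempty (S i)]
    [∀ i, Finite (Q i)] [∀ i, Nonempty (Q i)]
    (Δ : A → (∀ i, S i) → (∀ i, S i)) (hΔ : ∀ a, IsPMap ↑(loc a) (Δ a))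
    (s_in : ∀ i, S i)
    (Φ : (traceCon loc).Quotient → (∀ i, S i) → (∀ i, S i))
    (hΦ1 : Φ 1 = id) (hΦmul : ∀ u v, Φ (u * v) = Φ v ∘ Φ u)
    (hΦof : ∀ a, Φ ((traceCon loc).mk' (FreeMonoid.of a)) = Δ a)
    (χ : (traceCon loc).Quotient → (traceCon (locE loc)).Quotient)
    (hχ : ∀ w : List A,
      χ ((traceCon loc).mk' (FreeMonoid.ofList w)) =
        (traceCon (locE loc)).mk' (FreeMonoid.ofList (transduce loc Δ s_in w)))
    (ψ : (traceCon (locE loc)).Quotient → (∀ i, Q i) → (∀ i, Q i))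
    (hψ1 : ψ 1 = id) (hψmul : ∀ u v, ψ (u * v) = ψ v ∘ ψ u)
    (hψasync : ∀ e : ExtLetter A loc S,
      IsPMap ↑(loc e.1) (ψ ((traceCon (locE loc)).mk' (FreeMonoid.of e))))
    (q_in : ∀ i, Q i) (Qfin : Set (∀ i, Q i))
    (L : Set (traceCon (locE loc)).Quotient)
    (hL : L = {t' | ψ t' q_in ∈ Qfin}) :
    ∃ H : (traceCon loc).Quotient →
        ((∀ i, S i) × (∀ i, Q i)) → ((∀ i, S i) × (∀ i, Q i)),
      H 1 = id ∧
      (∀ u v, H (u * v) = H v ∘ H u) ∧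
      (∀ a, H ((traceCon loc).mk' (FreeMonoid.of a)) = fun p =>
        (Δ a p.1,
         ψ ((traceCon (locE loc)).mk'
            (FreeMonoid.of (⟨a, fun i => p.1 i.1⟩ : ExtLetter A loc S))) p.2)) ∧
      (∀ a, IsPMap2 ↑(loc a) (H ((traceCon loc).mk' (FreeMonoid.of a)))) ∧
      χ ⁻¹' L = {t | (H t (s_in, q_in)).2 ∈ Qfin} := by
  classical
  -- the one-step action of a letter on the wreath product state space
  set step : A → ((∀ i, S i) × (∀ i, Q i)) → ((∀ i, S i) × (∀ i, Q i)) :=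
    fun a p => (Δ a p.1,
       ψ ((traceCon (locE loc)).mk'
          (FreeMonoid.of (⟨a, fun i => p.1 i.1⟩ : ExtLetter A loc S))) p.2) with hstepdef
  -- ψ commutes on single extended letters with disjoint locations
  have ψcomm : ∀ e f : ExtLetter A loc S, Disjoint (loc e.1) (loc f.1) →
      ∀ q, ψ ((traceCon (locE loc)).mk' (FreeMonoid.of f))
          (ψ ((traceCon (locE loc)).mk' (FreeMonoid.of e)) q) =
        ψ ((traceCon (locE loc)).mk' (FreeMonoid.of e))
          (ψ ((traceCon (locE loc)).mk' (FreeMonoid.of f)) q) := by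
    intro e f hd q
    have h1 : (traceCon (locE loc)).mk' (FreeMonoid.of e * FreeMonoid.of f) =
        (traceCon (locE loc)).mk' (FreeMonoid.of f * FreeMonoid.of e) := by
      apply (Con.eq _).2
      exact ConGen.Rel.of _ _ ⟨e, f, hd, rfl, rfl⟩
    have he : ψ ((traceCon (locE loc)).mk' (FreeMonoid.of e * FreeMonoid.of f)) q =
        ψ ((traceCon (locE loc)).mk' (FreeMonoid.of f))
          (ψ ((traceCon (locE loc)).mk' (FreeMonoid.of e)) q) := by
      rw [map_mul, hψmul]; rfl
    have hf : ψ ((traceCon (locE loc)).mk' (FreeMonoid.of f * FreeMonoid.of e)) q =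
        ψ ((traceCon (locE loc)).mk' (FreeMonoid.of e))
          (ψ ((traceCon (locE loc)).mk' (FreeMonoid.of f)) q) := by
      rw [map_mul, hψmul]; rfl
    rw [← he, ← hf, h1]
  -- Δ's with disjoint locations commute
  have Δcomm : ∀ a b : A, Disjoint (loc a) (loc b) → ∀ s,
      Δ b (Δ a s) = Δ a (Δ b s) := by
    intro a b hd s
    funext i
    have hda := Finset.disjoint_left.1 hd
    have hdb := Finset.disjoint_right.1 hd
    by_cases hia : i ∈ loc a
    · have hib : i ∉ loc b := hda hia
      rw [(hΔ b).1 _ i (by simpa using hib)]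
      exact ((hΔ a).2 (Δ b s) s
        (fun j hj => (hΔ b).1 s j (by simpa using hda (by simpa using hj)))
        i (by simpa using hia)).symm
    · by_cases hib : i ∈ loc b
      · rw [(hΔ a).1 (Δ b s) i (by simpa using hia)]
        exact (hΔ b).2 (Δ a s) s
          (fun j hj => (hΔ a).1 s j (by simpa using hdb (by simpa using hj)))
          i (by simpa using hib)
      · rw [(hΔ b).1 _ i (by simpa using hib), (hΔ a).1 _ i (by simpa using hia),
          (hΔ a).1 _ i (by simpa using hia), (hΔ b).1 _ i (by simpa using hib)]
  -- the extended letter is insensitive to applying a disjoint Δ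
  have letter_eq : ∀ a b : A, Disjoint (loc a) (loc b) → ∀ s : (∀ i, S i),
      (⟨b, fun i => (Δ a s) i.1⟩ : ExtLetter A loc S) = ⟨b, fun i => s i.1⟩ := by
    intro a b hd s
    congr 1
    funext i
    exact (hΔ a).1 s i.1 (by
      simp only [Finset.mem_coe]
      exact Finset.disjoint_right.1 hd i.2)
  -- steps with disjoint locations commute
  have stepcomm : ∀ a b : A, Disjoint (loc a) (loc b) →
      step b ∘ step a = step a ∘ step b := by
    intro a b hd
    funext p
    simp only [Function.comp_apply, hstepdef]
    refine Prod.ext (Δcomm a b hd p.1) ?_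
    dsimp only
    rw [letter_eq a b hd p.1, letter_eq b a hd.symm p.1]
    exact ψcomm _ _ hd p.2
  -- build the monoid hom into the opposite of the endomorphism monoid
  set F : FreeMonoid A →* (Function.End ((∀ i, S i) × (∀ i, Q i)))ᵐᵒᵖ :=
    FreeMonoid.lift (fun a => MulOpposite.op (step a)) with hFdef
  have hle : traceCon loc ≤ Con.ker F := by
    refine Con.conGen_le.2 ?_
    rintro x y ⟨a, b, hd, rfl, rfl⟩
    rw [Con.ker_rel]
    simp only [map_mul, hFdef, FreeMonoid.lift_eval_of, ← MulOpposite.op_mul]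
    show MulOpposite.op (step b ∘ step a) = MulOpposite.op (step a ∘ step b); congr 1
    exact stepcomm a b hd
  set H0 : (traceCon loc).Quotient →* (Function.End ((∀ i, S i) × (∀ i, Q i)))ᵐᵒᵖ :=
    Con.lift _ F hle with hH0def
  have hHof : ∀ a, (H0 ((traceCon loc).mk' (FreeMonoid.of a))).unop = step a := by
    intro a
    rw [hH0def, Con.lift_mk' hle, hFdef]
    simp [FreeMonoid.lift_eval_of]
    rfl
  refine ⟨fun t => (H0 t).unop, ?_, ?_, ?_, ?_, ?_⟩
  · show (H0 1).unop = id
    rw [map_one]; rfl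
  · intro u v
    show (H0 (u * v)).unop = (H0 v).unop ∘ (H0 u).unop
    rw [map_mul]
    rfl
  · intro a
    show (H0 ((traceCon loc).mk' (FreeMonoid.of a))).unop = _
    rw [hHof a]
  · intro a
    show IsPMap2 _ (H0 ((traceCon loc).mk' (FreeMonoid.of a))).unop
    rw [hHof a]
    constructor
    · intro p i hi
      refine ⟨(hΔ a).1 p.1 i hi, ?_⟩
      exact (hψasync ⟨a, fun j => p.1 j.1⟩).1 p.2 i hi
    · intro p p' hag i hi
      refine ⟨(hΔ a).2 p.1 p'.1 (fun j hj => (hag j hj).1) i hi, ?_⟩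
      have hlet : (⟨a, fun j => p.1 j.1⟩ : ExtLetter A loc S) =
          ⟨a, fun j => p'.1 j.1⟩ := by
        congr 1
        funext j
        exact (hag j.1 (by simpa using j.2)).1
      simp only [hstepdef]
      rw [hlet]
      exact (hψasync ⟨a, fun j => p'.1 j.1⟩).2 p.2 p'.2
        (fun j hj => (hag j hj).2) i hi
  · -- the key word-level formula
    have key : ∀ (w : List A) (p : (∀ i, S i) × (∀ i, Q i)),
        (H0 ((traceCon loc).mk' (FreeMonoid.ofList w))).unop p =
        (Φ ((traceCon loc).mk' (FreeMonoid.ofList w)) p.1,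
         ψ ((traceCon (locE loc)).mk'
            (FreeMonoid.ofList (transduce loc Δ p.1 w))) p.2) := by
      intro w
      induction w with
      | nil =>
          intro p
          have ht : transduce loc Δ p.1 ([] : List A) = [] := rfl
          have h1 : (FreeMonoid.ofList ([] : List A)) = (1 : FreeMonoid A) := rfl
          have h2 : (FreeMonoid.ofList ([] : List (ExtLetter A loc S))) =
            (1 : FreeMonoid (ExtLetter A loc S)) := rfl
          rw [ht, h1, h2, map_one, map_one, map_one, hΦ1, hψ1]
          rfl
      | cons a w ih =>
          intro p
          have h1 : FreeMonoid.ofList (a :: w) =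
              FreeMonoid.of a * FreeMonoid.ofList w := rfl
          have h2 : transduce loc Δ p.1 (a :: w) =
              (⟨a, fun i => p.1 i.1⟩ : ExtLetter A loc S) ::
                transduce loc Δ (Δ a p.1) w := rfl
          set e : ExtLetter A loc S := ⟨a, fun i => p.1 i.1⟩ with hedef
          have h3 : FreeMonoid.ofList (e :: transduce loc Δ (Δ a p.1) w) =
              FreeMonoid.of e *
                FreeMonoid.ofList (transduce loc Δ (Δ a p.1) w) := rfl
          rw [h1, h2]; erw [h3]; rw [map_mul, map_mul, map_mul]
          have hunop : (H0 ((traceCon loc).mk' (FreeMonoid.of a)) *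
              H0 ((traceCon loc).mk' (FreeMonoid.ofList w))).unop =
              (H0 ((traceCon loc).mk' (FreeMonoid.ofList w))).unop ∘
              (H0 ((traceCon loc).mk' (FreeMonoid.of a))).unop := rfl
          rw [hunop]
          erw [Function.comp_apply]; rw [hHof a, ih (step a p)]
          rw [hΦmul, hψmul, hΦof]
          rfl
    ext t
    induction t using Con.induction_on with
    | H w =>
      have hw : (w : (traceCon loc).Quotient) =
          (traceCon loc).mk' (FreeMonoid.ofList w.toList) := by
        simp
      simp only [Set.mem_preimage, Set.mem_setOf_eq, hw, hχ, hL, Set.mem_setOf_eq,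
        key w.toList (s_in, q_in)]
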